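/- The misclassification distance dist(C,C') = min_{σ ∈ S_k} (1/n) Σ_i |C_i \ C'_{σ(i)}| between k-clusterings of an n-point set satisfies the triangle inequality: dist(C,C'') ≤ dist(C,C') + dist(C',C''). -/

import Mathlib

open Finset

variable {X : Type*} [Fintype X] [DecidableEq X] {k : ℕ}

/-- Misclassification distance between two k-clusterings:
dist(C,C') = min_{σ ∈ S_k} (1/n) Σ_i |C_i \ C'_{σ(i)}|. -/
noncomputable def clusterDist (C C' : Fin k → Finset X) : ℝ :=
  (Finset.univ.inf' Finset.univ_nonempty
    (fun σ : Equiv.Perm (Fin k) => ∑ i, (((C i) \ (C' (σ i))).card : ℝ))) /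
    (Fintype.card X)

/-- The misclassification distance between k-clusterings of an n-point
set satisfies the triangle inequality: dist(C,C'') ≤ dist(C,C') + dist(C',C''). -/
theorem stmt_18 (C C' C'' : Fin k → Finset X)
    (hC : ∀ x : X, ∃! i : Fin k, x ∈ C i)
    (hC' : ∀ x : X, ∃! i : Fin k, x ∈ C' i)
    (hC'' : ∀ x : X, ∃! i : Fin k, x ∈ C'' i) :
    clusterDist C C'' ≤ clusterDist C C' + clusterDist C' C'' := by
  obtain ⟨σ, -, hσ⟩ := Finset.exists_mem_eq_inf' (Finset.univ_nonempty)
    (fun σ : Equiv.Perm (Fin k) => ∑ i, (((C i) \ (C' (σ i))).card : ℝ))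
  obtain ⟨τ, -, hτ⟩ := Finset.exists_mem_eq_inf' (Finset.univ_nonempty)
    (fun τ : Equiv.Perm (Fin k) => ∑ i, (((C' i) \ (C'' (τ i))).card : ℝ))
  have key : (Finset.univ.inf' Finset.univ_nonempty
      (fun ρ : Equiv.Perm (Fin k) => ∑ i, (((C i) \ (C'' (ρ i))).card : ℝ))) ≤
      (∑ i, (((C i) \ (C' (σ i))).card : ℝ)) + ∑ i, (((C' i) \ (C'' (τ i))).card : ℝ) := by
    refine le_trans (Finset.inf'_le _ (Finset.mem_univ (σ.trans τ))) ?_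
    have hre : ∑ i, (((C' i) \ (C'' (τ i))).card : ℝ)
        = ∑ i, (((C' (σ i)) \ (C'' (τ (σ i)))).card : ℝ) :=
      (Equiv.sum_comp σ (fun j => (((C' j) \ (C'' (τ j))).card : ℝ))).symm
    rw [hre, ← Finset.sum_add_distrib]
    refine Finset.sum_le_sum fun i _ => ?_
    have hsub : (C i) \ (C'' (τ (σ i))) ⊆
        ((C i) \ (C' (σ i))) ∪ ((C' (σ i)) \ (C'' (τ (σ i)))) := by
      intro x hx
      simp only [Finset.mem_sdiff, Finset.mem_union] at hx ⊢
      by_cases hx' : x ∈ C' (σ i)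
      · exact Or.inr ⟨hx', hx.2⟩
      · exact Or.inl ⟨hx.1, hx'⟩
    calc ((((C i) \ (C'' ((σ.trans τ) i))).card : ℝ))
        ≤ ((((C i) \ (C' (σ i))) ∪ ((C' (σ i)) \ (C'' (τ (σ i))))).card : ℝ) := by
          exact_mod_cast Finset.card_le_card hsub
      _ ≤ _ := by exact_mod_cast Finset.card_union_le _ _
  unfold clusterDist
  rw [← add_div, hσ, hτ]
  rcases Nat.eq_zero_or_pos (Fintype.card X) with h | h
  · simp [h]
  · rw [div_le_div_iff_of_pos_right (by exact_mod_cast h)]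
    simpa [hσ, hτ] using key
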